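/- arXiv:1803.05164 — 2 statements merged into one kernel-verified Lean document; each statement's English description precedes it below -/
import Mathlib

section
/- D(2n) = (-1)^(n choose 2) · D(n) and D(2n+1) = (-1)^((n+1) choose 2) · D(n), with D(0) = 1. -/
open Classical in
noncomputable def A (n : ℕ) : ℤ := if ∃ k : ℕ, n + 2 = 2 ^ (k + 1) then 1 else 0

noncomputable def D (n : ℕ) : ℤ :=
  Matrix.det (Matrix.of fun i j : Fin n => A ((i : ℕ) + j))

open Classical in
noncomputable def Bs (m : ℕ) : ℤ := if ∃ k : ℕ, m + 1 = 2 ^ k then 1 else 0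

lemma A_two_mul (m : ℕ) : A (2 * m) = Bs m := by
  classical
  simp only [A, Bs]
  congr 1
  apply propext
  constructor
  · rintro ⟨k, hk⟩; exact ⟨k, by rw [pow_succ] at hk; omega⟩
  · rintro ⟨k, hk⟩; exact ⟨k, by rw [pow_succ]; omega⟩

lemma A_odd (m : ℕ) : A (2 * m + 1) = 0 := by
  classical
  rw [A, if_neg]
  rintro ⟨k, hk⟩
  rw [pow_succ] at hk
  omega

lemma Bs_succ (m : ℕ) : Bs (m + 1) = A m := by
  classical
  simp only [A, Bs]
  congr 1
  apply propext
  constructor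
  · rintro ⟨k, hk⟩
    match k with
    | 0 => omega
    | k + 1 => exact ⟨k, hk⟩
  · rintro ⟨k, hk⟩; exact ⟨k + 1, hk⟩

lemma Bs_even (m : ℕ) : Bs (2 * m + 2) = 0 := by
  rw [show 2 * m + 2 = (2 * m + 1) + 1 by ring, Bs_succ, A_odd]

lemma Bs_odd (m : ℕ) : Bs (2 * m + 1) = Bs m := by
  classical
  simp only [Bs]
  congr 1
  apply propext
  constructor
  · rintro ⟨k, hk⟩
    match k with
    | 0 => omega
    | k + 1 => exact ⟨k, by rw [pow_succ] at hk; omega⟩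
  · rintro ⟨k, hk⟩; exact ⟨k + 1, by rw [pow_succ]; omega⟩

lemma Bs_zero : Bs 0 = 1 := by
  rw [Bs, if_pos ⟨0, rfl⟩]
noncomputable def Dm (n : ℕ) : Matrix (Fin n) (Fin n) ℤ := Matrix.of fun i j => A ((i : ℕ) + j)
noncomputable def Em (n : ℕ) : Matrix (Fin n) (Fin n) ℤ := Matrix.of fun i j => Bs ((i : ℕ) + j)
noncomputable def E (n : ℕ) : ℤ := (Em n).det

lemma D_eq (n : ℕ) : D n = (Dm n).det := rfl

/-- interleaving equivalence for even size -/
def ie (n : ℕ) : Fin n ⊕ Fin n ≃ Fin (2 * n) where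
  toFun := Sum.elim (fun a => ⟨2 * a, by omega⟩) (fun a => ⟨2 * a + 1, by omega⟩)
  invFun i := if h : (i : ℕ) % 2 = 0 then Sum.inl ⟨(i : ℕ) / 2, by omega⟩
    else Sum.inr ⟨(i : ℕ) / 2, by omega⟩
  left_inv := by
    rintro (a | a)
    · dsimp only [Sum.elim_inl]
      rw [dif_pos (by omega)]
      exact congrArg _ (Fin.ext (by simp <;> omega))
    · dsimp only [Sum.elim_inr]
      rw [dif_neg (by omega)]
      exact congrArg _ (Fin.ext (by simp <;> omega))
  right_inv := by
    intro i
    simp only []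
    by_cases h : (i : ℕ) % 2 = 0
    · rw [dif_pos h]
      exact Fin.ext (by simp <;> omega)
    · rw [dif_neg h]
      exact Fin.ext (by simp <;> omega)

/-- interleaving equivalence for odd size -/
def io (n : ℕ) : Fin (n + 1) ⊕ Fin n ≃ Fin (2 * n + 1) where
  toFun := Sum.elim (fun a => ⟨2 * a, by omega⟩) (fun a => ⟨2 * a + 1, by omega⟩)
  invFun i := if h : (i : ℕ) % 2 = 0 then Sum.inl ⟨(i : ℕ) / 2, by omega⟩
    else Sum.inr ⟨(i : ℕ) / 2, by omega⟩
  left_inv := by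
    rintro (a | a)
    · dsimp only [Sum.elim_inl]
      rw [dif_pos (by omega)]
      exact congrArg _ (Fin.ext (by simp <;> omega))
    · dsimp only [Sum.elim_inr]
      rw [dif_neg (by omega)]
      exact congrArg _ (Fin.ext (by simp <;> omega))
  right_inv := by
    intro i
    simp only []
    by_cases h : (i : ℕ) % 2 = 0
    · rw [dif_pos h]
      exact Fin.ext (by simp <;> omega)
    · rw [dif_neg h]
      exact Fin.ext (by simp <;> omega)

/-- equivalence singling out index 0, then evens ≥ 2, then odds -/
def iu (n : ℕ) : Unit ⊕ (Fin n ⊕ Fin n) ≃ Fin (2 * n + 1) where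
  toFun := Sum.elim (fun _ => ⟨0, by omega⟩)
    (Sum.elim (fun a => ⟨2 * a + 2, by omega⟩) (fun a => ⟨2 * a + 1, by omega⟩))
  invFun i :=
    if h0 : (i : ℕ) = 0 then Sum.inl ()
    else if h : (i : ℕ) % 2 = 0 then Sum.inr (Sum.inl ⟨((i : ℕ) - 2) / 2, by omega⟩)
    else Sum.inr (Sum.inr ⟨(i : ℕ) / 2, by omega⟩)
  left_inv := by
    rintro (u | (a | a))
    · simp
    · dsimp only [Sum.elim_inl, Sum.elim_inr]
      rw [dif_neg (by omega), dif_pos (by omega)]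
      refine congrArg _ (congrArg _ (Fin.ext ?_))
      simp <;> omega
    · dsimp only [Sum.elim_inl, Sum.elim_inr]
      rw [dif_neg (by omega), dif_neg (by omega)]
      refine congrArg _ (congrArg _ (Fin.ext ?_))
      simp <;> omega
  right_inv := by
    intro i
    simp only []
    by_cases h0 : (i : ℕ) = 0
    · rw [dif_pos h0]
      exact Fin.ext (by simp <;> omega)
    · rw [dif_neg h0]
      by_cases h : (i : ℕ) % 2 = 0
      · rw [dif_pos h]
        exact Fin.ext (by simp <;> omega)
      · rw [dif_neg h]
        exact Fin.ext (by simp <;> omega)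
section SignSumComm

open Equiv Equiv.Perm

variable {n : ℕ}

private lemma swap_pairwise_comm (n : ℕ) :
    ((Finset.univ : Finset (Fin n)) : Set (Fin n)).Pairwise
      (Function.onFun Commute fun i : Fin n =>
        (Equiv.swap (Sum.inl i) (Sum.inr i) : Equiv.Perm (Fin n ⊕ Fin n))) := by
  intro i _ j _ hij
  have hd : (Equiv.swap (Sum.inl i) (Sum.inr i) : Equiv.Perm (Fin n ⊕ Fin n)).Disjoint
      (Equiv.swap (Sum.inl j) (Sum.inr j)) := by
    intro x
    by_cases h : x = Sum.inl i ∨ x = Sum.inr i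
    · right
      rcases h with h | h <;> subst h <;>
        exact Equiv.swap_apply_of_ne_of_ne (by simp [hij]) (by simp [hij])
    · left
      push_neg at h
      exact Equiv.swap_apply_of_ne_of_ne h.1 h.2
  exact hd.commute

private lemma noncommProd_swap_apply (s : Finset (Fin n)) :
    ∀ x, (s.noncommProd (fun i => (Equiv.swap (Sum.inl i) (Sum.inr i) : Equiv.Perm (Fin n ⊕ Fin n)))
        ((swap_pairwise_comm n).mono (by simp))) x =
      Sum.elim (fun a => if a ∈ s then Sum.inr a else Sum.inl a)
        (fun a => if a ∈ s then Sum.inl a else Sum.inr a) x := by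
  classical
  induction s using Finset.induction_on with
  | empty => intro x; rcases x with a | a <;> simp
  | @insert a s ha ih =>
    intro x
    rw [Finset.noncommProd_insert_of_notMem _ _ _ _ ha]
    rw [Equiv.Perm.mul_apply, ih]
    rcases x with b | b <;> by_cases hb : b ∈ s <;> by_cases hab : b = a <;>
      simp [hb, hab, Equiv.swap_apply_def, ha] <;> simp_all
end SignSumComm
private lemma sumComm_eq_noncommProd (n : ℕ) :
    (Equiv.sumComm (Fin n) (Fin n) : Equiv.Perm (Fin n ⊕ Fin n)) =
      (Finset.univ.noncommProd
        (fun i => (Equiv.swap (Sum.inl i) (Sum.inr i) : Equiv.Perm (Fin n ⊕ Fin n)))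
        ((swap_pairwise_comm n).mono (by simp))) := by
  apply Equiv.ext
  intro x
  rw [noncommProd_swap_apply]
  rcases x with a | a <;> simp

lemma sign_sumComm (n : ℕ) :
    Equiv.Perm.sign (Equiv.sumComm (Fin n) (Fin n) : Equiv.Perm (Fin n ⊕ Fin n)) = (-1) ^ n := by
  rw [sumComm_eq_noncommProd]
  rw [Finset.map_noncommProd _ _ _ (Equiv.Perm.sign (α := Fin n ⊕ Fin n))]
  rw [Finset.noncommProd_eq_prod]
  have : ∀ i : Fin n,
      Equiv.Perm.sign (Equiv.swap (Sum.inl i : Fin n ⊕ Fin n) (Sum.inr i)) = -1 := fun i =>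
    Equiv.Perm.sign_swap (by simp)
  simp only [this, Finset.prod_const, Finset.card_univ, Fintype.card_fin]

/-- determinant of a 2x2 block matrix with zero bottom-right corner -/
lemma det_blocks_zero₂₂ {n : ℕ} (P Q R : Matrix (Fin n) (Fin n) ℤ) :
    (Matrix.fromBlocks P Q R 0).det = (-1 : ℤ) ^ n * (R.det * Q.det) := by
  have h := Matrix.det_permute (Equiv.sumComm (Fin n) (Fin n) : Equiv.Perm (Fin n ⊕ Fin n))
    (Matrix.fromBlocks P Q R 0)
  have he : ((Matrix.fromBlocks P Q R 0).submatrix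
      (⇑(Equiv.sumComm (Fin n) (Fin n) : Equiv.Perm (Fin n ⊕ Fin n))) id) =
      Matrix.fromBlocks R 0 P Q := by
    ext (a | a) (b | b) <;> rfl
  rw [he, Matrix.det_fromBlocks_zero₁₂, sign_sumComm] at h
  push_cast at h
  have h3 : (-1 : ℤ) ^ n * (-1 : ℤ) ^ n = 1 := by
    rw [← pow_add]
    exact Even.neg_one_pow ⟨n, by ring⟩
  calc (Matrix.fromBlocks P Q R 0).det
      = ((-1 : ℤ) ^ n * (-1 : ℤ) ^ n) * (Matrix.fromBlocks P Q R 0).det := by rw [h3, one_mul]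
    _ = (-1 : ℤ) ^ n * ((-1 : ℤ) ^ n * (Matrix.fromBlocks P Q R 0).det) := by ring
    _ = (-1 : ℤ) ^ n * (R.det * Q.det) := by rw [← h]
lemma D_two_mul (n : ℕ) : D (2 * n) = E n * D n := by
  have hsub : (Dm (2 * n)).submatrix (ie n) (ie n) =
      Matrix.fromBlocks (Em n) 0 0 (Dm n) := by
    ext (a | a) (b | b)
    · show A (2 * (a : ℕ) + 2 * (b : ℕ)) = Bs ((a : ℕ) + b)
      rw [show 2 * (a : ℕ) + 2 * (b : ℕ) = 2 * ((a : ℕ) + b) by ring, A_two_mul]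
    · show A (2 * (a : ℕ) + (2 * (b : ℕ) + 1)) = 0
      rw [show 2 * (a : ℕ) + (2 * (b : ℕ) + 1) = 2 * ((a : ℕ) + b) + 1 by ring, A_odd]
    · show A (2 * (a : ℕ) + 1 + 2 * (b : ℕ)) = 0
      rw [show 2 * (a : ℕ) + 1 + 2 * (b : ℕ) = 2 * ((a : ℕ) + b) + 1 by ring, A_odd]
    · show A (2 * (a : ℕ) + 1 + (2 * (b : ℕ) + 1)) = A ((a : ℕ) + b)
      rw [show 2 * (a : ℕ) + 1 + (2 * (b : ℕ) + 1) = 2 * ((a : ℕ) + b + 1) by ring,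
        A_two_mul, Bs_succ]
  have hd := Matrix.det_submatrix_equiv_self (ie n) (Dm (2 * n))
  rw [hsub] at hd
  rw [D_eq, ← hd, Matrix.det_fromBlocks_zero₁₂]
  rfl

lemma D_odd (n : ℕ) : D (2 * n + 1) = E (n + 1) * D n := by
  have hsub : (Dm (2 * n + 1)).submatrix (io n) (io n) =
      Matrix.fromBlocks (Em (n + 1)) 0 0 (Dm n) := by
    ext (a | a) (b | b)
    · show A (2 * (a : ℕ) + 2 * (b : ℕ)) = Bs ((a : ℕ) + b)
      rw [show 2 * (a : ℕ) + 2 * (b : ℕ) = 2 * ((a : ℕ) + b) by ring, A_two_mul]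
    · show A (2 * (a : ℕ) + (2 * (b : ℕ) + 1)) = 0
      rw [show 2 * (a : ℕ) + (2 * (b : ℕ) + 1) = 2 * ((a : ℕ) + b) + 1 by ring, A_odd]
    · show A (2 * (a : ℕ) + 1 + 2 * (b : ℕ)) = 0
      rw [show 2 * (a : ℕ) + 1 + 2 * (b : ℕ) = 2 * ((a : ℕ) + b) + 1 by ring, A_odd]
    · show A (2 * (a : ℕ) + 1 + (2 * (b : ℕ) + 1)) = A ((a : ℕ) + b)
      rw [show 2 * (a : ℕ) + 1 + (2 * (b : ℕ) + 1) = 2 * ((a : ℕ) + b + 1) by ring,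
        A_two_mul, Bs_succ]
  have hd := Matrix.det_submatrix_equiv_self (io n) (Dm (2 * n + 1))
  rw [hsub] at hd
  rw [D_eq, ← hd, Matrix.det_fromBlocks_zero₁₂]
  rfl

lemma E_two_mul (n : ℕ) : E (2 * n) = (-1 : ℤ) ^ n * (E n * E n) := by
  have hsub : (Em (2 * n)).submatrix (ie n) (ie n) =
      Matrix.fromBlocks (Matrix.of fun a b : Fin n => Bs (2 * ((a : ℕ) + b)))
        (Em n) (Em n) 0 := by
    ext (a | a) (b | b)
    · show Bs (2 * (a : ℕ) + 2 * (b : ℕ)) = Bs (2 * ((a : ℕ) + b))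
      rw [show 2 * (a : ℕ) + 2 * (b : ℕ) = 2 * ((a : ℕ) + b) by ring]
    · show Bs (2 * (a : ℕ) + (2 * (b : ℕ) + 1)) = Bs ((a : ℕ) + b)
      rw [show 2 * (a : ℕ) + (2 * (b : ℕ) + 1) = 2 * ((a : ℕ) + b) + 1 by ring, Bs_odd]
    · show Bs (2 * (a : ℕ) + 1 + 2 * (b : ℕ)) = Bs ((a : ℕ) + b)
      rw [show 2 * (a : ℕ) + 1 + 2 * (b : ℕ) = 2 * ((a : ℕ) + b) + 1 by ring, Bs_odd]
    · show Bs (2 * (a : ℕ) + 1 + (2 * (b : ℕ) + 1)) = 0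
      rw [show 2 * (a : ℕ) + 1 + (2 * (b : ℕ) + 1) = 2 * ((a : ℕ) + b) + 2 by ring, Bs_even]
  have hd := Matrix.det_submatrix_equiv_self (ie n) (Em (2 * n))
  rw [hsub] at hd
  rw [show E (2 * n) = (Em (2 * n)).det from rfl, ← hd, det_blocks_zero₂₂]
  rfl
lemma E_odd (n : ℕ) : E (2 * n + 1) = (-1 : ℤ) ^ n * (D n * D n) := by
  classical
  set M : Matrix (Unit ⊕ (Fin n ⊕ Fin n)) (Unit ⊕ (Fin n ⊕ Fin n)) ℤ :=
    (Em (2 * n + 1)).submatrix (iu n) (iu n) with hM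
  -- entry computations
  have h00 : M (Sum.inl ()) (Sum.inl ()) = 1 := by
    show Bs (0 + 0) = 1
    rw [Nat.zero_add, Bs_zero]
  have h0e : ∀ b : Fin n, M (Sum.inl ()) (Sum.inr (Sum.inl b)) = 0 := by
    intro b
    show Bs (0 + (2 * (b : ℕ) + 2)) = 0
    rw [show 0 + (2 * (b : ℕ) + 2) = 2 * (b : ℕ) + 2 by ring, Bs_even]
  have he0 : ∀ a : Fin n, M (Sum.inr (Sum.inl a)) (Sum.inl ()) = 0 := by
    intro a
    show Bs (2 * (a : ℕ) + 2 + 0) = 0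
    rw [show 2 * (a : ℕ) + 2 + 0 = 2 * (a : ℕ) + 2 by ring, Bs_even]
  have hee : ∀ a b : Fin n, M (Sum.inr (Sum.inl a)) (Sum.inr (Sum.inl b)) = 0 := by
    intro a b
    show Bs (2 * (a : ℕ) + 2 + (2 * (b : ℕ) + 2)) = 0
    rw [show 2 * (a : ℕ) + 2 + (2 * (b : ℕ) + 2) = 2 * ((a : ℕ) + b + 1) + 2 by ring, Bs_even]
  have heo : ∀ a b : Fin n, M (Sum.inr (Sum.inl a)) (Sum.inr (Sum.inr b)) = A ((a : ℕ) + b) := by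
    intro a b
    show Bs (2 * (a : ℕ) + 2 + (2 * (b : ℕ) + 1)) = A ((a : ℕ) + b)
    rw [show 2 * (a : ℕ) + 2 + (2 * (b : ℕ) + 1) = 2 * ((a : ℕ) + b + 1) + 1 by ring,
      Bs_odd, Bs_succ]
  have ho0 : ∀ a : Fin n, M (Sum.inr (Sum.inr a)) (Sum.inl ()) = Bs a := by
    intro a
    show Bs (2 * (a : ℕ) + 1 + 0) = Bs (a : ℕ)
    rw [show 2 * (a : ℕ) + 1 + 0 = 2 * (a : ℕ) + 1 by ring, Bs_odd]
  have hoe : ∀ a b : Fin n, M (Sum.inr (Sum.inr a)) (Sum.inr (Sum.inl b)) = A ((a : ℕ) + b) := by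
    intro a b
    show Bs (2 * (a : ℕ) + 1 + (2 * (b : ℕ) + 2)) = A ((a : ℕ) + b)
    rw [show 2 * (a : ℕ) + 1 + (2 * (b : ℕ) + 2) = 2 * ((a : ℕ) + b + 1) + 1 by ring,
      Bs_odd, Bs_succ]
  have hoo : ∀ a b : Fin n, M (Sum.inr (Sum.inr a)) (Sum.inr (Sum.inr b)) = 0 := by
    intro a b
    show Bs (2 * (a : ℕ) + 1 + (2 * (b : ℕ) + 1)) = 0
    rw [show 2 * (a : ℕ) + 1 + (2 * (b : ℕ) + 1) = 2 * ((a : ℕ) + b) + 2 by ring, Bs_even]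
  -- split the first row
  set u : (Unit ⊕ (Fin n ⊕ Fin n)) → ℤ := fun j => if j = Sum.inl () then 1 else 0 with hu
  set v : (Unit ⊕ (Fin n ⊕ Fin n)) → ℤ := fun j => if j = Sum.inl () then 0 else M (Sum.inl ()) j
    with hv
  have hrow : M (Sum.inl ()) = u + v := by
    funext j
    by_cases hj : j = Sum.inl ()
    · subst hj
      simp [hu, hv, h00]
    · simp [hu, hv, hj]
  have hsplit : M.det = (M.updateRow (Sum.inl ()) u).det + (M.updateRow (Sum.inl ()) v).det := by
    conv_lhs => rw [← Matrix.updateRow_eq_self M (Sum.inl ()), hrow,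
      Matrix.det_updateRow_add]
  -- the v-part vanishes by a pigeonhole argument
  have hvzero : (M.updateRow (Sum.inl ()) v).det = 0 := by
    set N := M.updateRow (Sum.inl ()) v with hN
    rw [Matrix.det_apply]
    apply Finset.sum_eq_zero
    intro σ _
    have hprod : (∏ i, N (σ i) i) = 0 := by
      by_contra hp
      have h0 : ∀ i, N (σ i) i ≠ 0 := by
        intro i hi
        exact hp (Finset.prod_eq_zero (Finset.mem_univ i) hi)
      set C : Finset (Unit ⊕ (Fin n ⊕ Fin n)) :=
        insert (Sum.inl ()) ((Finset.univ : Finset (Fin n)).image fun a => Sum.inr (Sum.inl a))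
        with hC
      set T : Finset (Unit ⊕ (Fin n ⊕ Fin n)) :=
        (Finset.univ : Finset (Fin n)).image (fun a => Sum.inr (Sum.inr a)) with hT
      have hmap : ∀ c ∈ C, σ c ∈ T := by
        intro c hc
        have hcc : c = Sum.inl () ∨ ∃ b : Fin n, c = Sum.inr (Sum.inl b) := by
          rw [hC] at hc
          simp at hc
          tauto
        have hzero : ∀ x, (x = Sum.inl () ∨ ∃ a : Fin n, x = Sum.inr (Sum.inl a)) → N x c = 0 := by
          rintro x (rfl | ⟨a, rfl⟩)
          · rw [hN, Matrix.updateRow_self]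
            rcases hcc with rfl | ⟨b, rfl⟩
            · simp [hv]
            · simp [hv, h0e]
          · rw [hN, Matrix.updateRow_ne (by simp)]
            rcases hcc with rfl | ⟨b, rfl⟩
            · exact he0 a
            · exact hee a b
        rcases hσ : σ c with x | x | x
        · exact absurd (hzero _ (Or.inl rfl)) (hσ ▸ h0 c)
        · exact absurd (hzero _ (Or.inr ⟨x, rfl⟩)) (hσ ▸ h0 c)
        · rw [hT]
          simp
      have hinj : Set.InjOn σ (C : Set _) := fun a _ b _ h => σ.injective h
      have hcard := Finset.card_le_card_of_injOn σ hmap hinj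
      have hCcard : C.card = n + 1 := by
        rw [hC, Finset.card_insert_of_notMem (by simp),
          Finset.card_image_of_injective _ (by intro x y h; simpa using h)]
        simp
      have hTcard : T.card = n := by
        rw [hT, Finset.card_image_of_injective _ (by intro x y h; simpa using h)]
        simp
      omega
    rw [hprod, smul_zero]
  -- the u-part is a block triangular determinant
  have huval : (M.updateRow (Sum.inl ()) u).det = (-1 : ℤ) ^ n * (D n * D n) := by
    have hb : M.updateRow (Sum.inl ()) u =
        Matrix.fromBlocks (Matrix.of fun _ _ : Unit => (1 : ℤ)) 0
          (Matrix.of fun i _ => Sum.elim (fun _ : Fin n => (0 : ℤ)) (fun a : Fin n => Bs a) i)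
          (Matrix.fromBlocks 0 (Dm n) (Dm n) 0) := by
      ext (x | x | x) (y | y | y)
      · rw [Matrix.updateRow_self]; simp [hu]
      · rw [Matrix.updateRow_self]; simp [hu]
      · rw [Matrix.updateRow_self]; simp [hu]
      · rw [Matrix.updateRow_ne (by simp)]
        simpa using he0 x
      · rw [Matrix.updateRow_ne (by simp)]
        simpa using hee x y
      · rw [Matrix.updateRow_ne (by simp)]
        simpa [Dm] using heo x y
      · rw [Matrix.updateRow_ne (by simp)]
        simpa using ho0 x
      · rw [Matrix.updateRow_ne (by simp)]
        simpa [Dm] using hoe x y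
      · rw [Matrix.updateRow_ne (by simp)]
        simpa using hoo x y
    rw [hb, Matrix.det_fromBlocks_zero₁₂, det_blocks_zero₂₂, Matrix.det_unique]
    rw [← D_eq]
    simp
  have hdet : E (2 * n + 1) = M.det := by
    rw [hM, Matrix.det_submatrix_equiv_self]
    rfl
  rw [hdet, hsplit, hvzero, huval, add_zero]
lemma A_zero : A 0 = 1 := by
  rw [A, if_pos ⟨0, rfl⟩]

lemma neg_one_choose_even (m : ℕ) : (-1 : ℤ) ^ ((2 * m).choose 2) = (-1 : ℤ) ^ m := by
  match m with
  | 0 => norm_num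
  | m + 1 =>
    have h : (2 * (m + 1)).choose 2 = (2 * m + 1) * (m + 1) := by
      rw [Nat.choose_two_right, show 2 * (m + 1) - 1 = 2 * m + 1 by omega,
        show 2 * (m + 1) * (2 * m + 1) = ((2 * m + 1) * (m + 1)) * 2 by ring]
      exact Nat.mul_div_cancel _ two_pos
    rw [h, pow_mul, Odd.neg_one_pow ⟨m, by ring⟩]

lemma neg_one_choose_odd (m : ℕ) : (-1 : ℤ) ^ ((2 * m + 1).choose 2) = (-1 : ℤ) ^ m := by
  have h : (2 * m + 1).choose 2 = (2 * m + 1) * m := by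
    rw [Nat.choose_two_right, show 2 * m + 1 - 1 = 2 * m by omega,
      show (2 * m + 1) * (2 * m) = ((2 * m + 1) * m) * 2 by ring]
    exact Nat.mul_div_cancel _ two_pos
  rw [h, pow_mul, Odd.neg_one_pow ⟨m, by ring⟩]

lemma key (n : ℕ) : E n = (-1 : ℤ) ^ (n.choose 2) ∧ D n * D n = 1 := by
  induction n using Nat.strong_induction_on with
  | _ n ih =>
    match n with
    | 0 =>
      constructor
      · show (Em 0).det = _
        rw [Matrix.det_fin_zero]
        norm_num
      · rw [D_eq, Matrix.det_fin_zero]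
        norm_num
    | 1 =>
      constructor
      · show (Em 1).det = _
        rw [Matrix.det_fin_one]
        simp [Em, Bs_zero]
      · rw [D_eq, Matrix.det_fin_one]
        simp [Dm, A_zero]
    | (m + 2) =>
      rcases Nat.even_or_odd (m + 2) with ⟨k, hk⟩ | ⟨k, hk⟩
      · have hk' : m + 2 = 2 * k := by omega
        have ihk := ih k (by omega)
        have hc : (-1 : ℤ) ^ (k.choose 2) * (-1 : ℤ) ^ (k.choose 2) = 1 := by
          rw [← pow_add]
          exact Even.neg_one_pow ⟨_, rfl⟩
        constructor
        · rw [hk', E_two_mul, ihk.1, neg_one_choose_even, hc, mul_one]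
        · rw [hk', D_two_mul, ihk.1]
          calc (-1 : ℤ) ^ (k.choose 2) * D k * ((-1 : ℤ) ^ (k.choose 2) * D k)
              = ((-1 : ℤ) ^ (k.choose 2) * (-1 : ℤ) ^ (k.choose 2)) * (D k * D k) := by ring
            _ = 1 * 1 := by rw [hc, ihk.2]
            _ = 1 := by norm_num
      · have hk' : m + 2 = 2 * k + 1 := by omega
        have hk1 : 1 ≤ k := by omega
        have ihk := ih k (by omega)
        have ihk1 := ih (k + 1) (by omega)
        have hc : (-1 : ℤ) ^ ((k + 1).choose 2) * (-1 : ℤ) ^ ((k + 1).choose 2) = 1 := by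
          rw [← pow_add]
          exact Even.neg_one_pow ⟨_, rfl⟩
        constructor
        · rw [hk', E_odd, ihk.2, neg_one_choose_odd, mul_one]
        · rw [hk', D_odd, ihk1.1]
          calc (-1 : ℤ) ^ ((k + 1).choose 2) * D k * ((-1 : ℤ) ^ ((k + 1).choose 2) * D k)
              = ((-1 : ℤ) ^ ((k + 1).choose 2) * (-1 : ℤ) ^ ((k + 1).choose 2)) * (D k * D k) := by
                ring
            _ = 1 * 1 := by rw [hc, ihk.2]
            _ = 1 := by norm_num

theorem stmt7 :
    D 0 = 1 ∧
    (∀ n : ℕ, D (2 * n) = (-1 : ℤ) ^ (n.choose 2) * D n) ∧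
    (∀ n : ℕ, D (2 * n + 1) = (-1 : ℤ) ^ ((n + 1).choose 2) * D n) := by
  refine ⟨?_, ?_, ?_⟩
  · rw [D_eq, Matrix.det_fin_zero]
  · intro n
    rw [D_two_mul, (key n).1]
  · intro n
    rw [D_odd, (key (n + 1)).1]
end

section
/- D(n) = ∏_{j=0}^{n-1} S(j), where S is the paperfolding sequence defined by S(0) = 1, S(2n) = (-1)^n, S(2n+1) = S(n). -/
lemma A_eq_one {n : ℕ} (h : ∃ k : ℕ, n + 2 = 2 ^ (k + 1)) : A n = 1 := if_pos h
lemma A_eq_zero {n : ℕ} (h : ¬ ∃ k : ℕ, n + 2 = 2 ^ (k + 1)) : A n = 0 := if_neg h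

/-- data for the reversal map on `[a, q-a]` inside `Fin n`. -/
def rvf (n q a : ℕ) (hq : q - a < n) : Fin n → Fin n := fun i =>
  if h : a ≤ (i : ℕ) ∧ (i : ℕ) ≤ q - a then ⟨q - (i : ℕ), by omega⟩ else i

lemma rvf_invol (n q a : ℕ) (hq : q - a < n) : Function.Involutive (rvf n q a hq) := by
  intro i
  unfold rvf
  split_ifs with h1 h2 h3 <;> simp_all <;> first | rfl | (apply Fin.ext; simp; omega) | omega

/-- the reversal permutation. -/
def rv (n q a : ℕ) (hq : q - a < n) : Equiv.Perm (Fin n) :=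
  (rvf_invol n q a hq).toPerm _

lemma rv_apply (n q a : ℕ) (hq : q - a < n) (i : Fin n) :
    ((rv n q a hq i : Fin n) : ℕ) = if a ≤ (i : ℕ) ∧ (i : ℕ) ≤ q - a then q - (i : ℕ) else i := by
  show ((rvf n q a hq i : Fin n) : ℕ) = _
  unfold rvf
  split_ifs <;> simp

lemma rv_eq_one (n q a : ℕ) (hq : q - a < n) (h : q ≤ 2 * a) : rv n q a hq = 1 := by
  apply Equiv.ext
  intro i
  apply Fin.ext
  rw [rv_apply]
  simp only [Equiv.Perm.one_apply]
  split_ifs with h1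
  · omega
  · rfl

lemma squeeze {H n : ℕ} (hn : n < 2 * 2^H) {a b k : ℕ} (ha : 2^H - 1 ≤ a)
    (han : a < n) (hbn : b < n) (h : a + b + 2 = 2^(k+1)) : a + b + 2 = 2 * 2^H := by
  have hp : 0 < 2^H := pow_pos (by norm_num) H
  have h1 : 2^H < 2^(k+1) := by omega
  have h2 : 2^(k+1) < 2^(H+2) := by
    have e : 2^(H+2) = 4 * 2^H := by ring
    omega
  have hk1 : H < k + 1 := (Nat.pow_lt_pow_iff_right (by norm_num)).mp h1
  have hk2 : k + 1 < H + 2 := (Nat.pow_lt_pow_iff_right (by norm_num)).mp h2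
  have hk : k + 1 = H + 1 := by omega
  rw [hk] at h
  have e : 2^(H+1) = 2 * 2^H := by ring
  omega

lemma forcing {n H : ℕ} (h1 : 2^H ≤ n) (h2 : n < 2 * 2^H) (σ : Equiv.Perm (Fin n))
    (hσ : ∀ i : Fin n, ∃ k, (σ i : ℕ) + (i : ℕ) + 2 = 2^(k+1)) :
    (∀ i : Fin n, 2*2^H - 1 - n ≤ (i:ℕ) → (σ i : ℕ) + (i:ℕ) + 2 = 2*2^H) ∧
    (∀ i : Fin n, (i:ℕ) < 2*2^H - 1 - n → (σ i : ℕ) < 2*2^H - 1 - n) := by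
  set p := 2^H with hp
  set m := 2*p - 1 - n with hm
  have hp0 : 0 < p := pow_pos (by norm_num) H
  have Ha : ∀ i : Fin n, p - 1 ≤ (i:ℕ) → (σ i : ℕ) + (i:ℕ) + 2 = 2*p := by
    intro i hi
    obtain ⟨k, hk⟩ := hσ i
    have := squeeze (k := k) h2 hi i.2 (σ i).2 (by omega)
    omega
  have Hb : ∀ i : Fin n, p - 1 ≤ ((σ i : Fin n) : ℕ) → (σ i : ℕ) + (i:ℕ) + 2 = 2*p := by
    intro i hi
    obtain ⟨k, hk⟩ := hσ i
    have := squeeze (k := k) h2 hi (σ i).2 i.2 (by omega)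
    omega
  have Hc : ∀ i : Fin n, m ≤ (i:ℕ) → (σ i : ℕ) + (i:ℕ) + 2 = 2*p := by
    intro i hi
    by_cases hcase : p - 1 ≤ (i:ℕ)
    · exact Ha i hcase
    · push_neg at hcase
      have hjlt : 2*p - 2 - (i:ℕ) < n := by omega
      set j : Fin n := ⟨2*p - 2 - (i:ℕ), hjlt⟩ with hj
      set i₀ := σ⁻¹ j with hi₀
      have hσi₀ : σ i₀ = j := σ.apply_symm_apply j
      have hv : (σ i₀ : ℕ) = 2*p - 2 - (i:ℕ) := by rw [hσi₀]
      have hb := Hb i₀ (by omega)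
      have : (i₀ : ℕ) = (i : ℕ) := by omega
      have : i₀ = i := Fin.ext this
      rw [this] at hσi₀
      rw [hσi₀]
      simp only [hj]
      omega
  refine ⟨Hc, ?_⟩
  intro i hi
  by_contra hcon
  push_neg at hcon
  by_cases hcase : p - 1 ≤ (σ i : ℕ)
  · have := Hb i hcase
    have := (σ i).2
    omega
  · push_neg at hcase
    have hlt : 2*p - 2 - (σ i : ℕ) < n := by omega
    set i₁ : Fin n := ⟨2*p - 2 - (σ i : ℕ), hlt⟩ with hi₁
    have h₁ := Hc i₁ (by simp [hi₁]; omega)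
    have hval : (σ i₁ : ℕ) = (σ i : ℕ) := by simp only [hi₁] at h₁ ⊢; omega
    have heq : i = i₁ := σ.injective (Fin.ext hval).symm
    have hv2 : (i : ℕ) = (i₁ : ℕ) := congrArg Fin.val heq
    have hv3 : (i₁ : ℕ) = 2*p - 2 - (σ i : ℕ) := rfl
    omega
lemma rv_succ (n q a : ℕ) (hq : q - a < n) (hq' : q - (a+1) < n) (h : 2 * a < q) :
    rv n q a hq =
      Equiv.swap (⟨a, by omega⟩ : Fin n) (⟨q - a, hq⟩ : Fin n) * rv n q (a+1) hq' := by
  apply Equiv.ext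
  intro i
  apply Fin.ext
  rw [rv_apply, Equiv.Perm.mul_apply, Equiv.swap_apply_def]
  have hi := i.2
  have hj := rv_apply n q (a+1) hq' i
  rw [apply_ite (Fin.val), apply_ite (Fin.val)]
  simp only [Fin.ext_iff]
  split_ifs at hj ⊢ <;> simp_all <;> omega

lemma rv_sign (n e : ℕ) : ∀ d a, e - a ≤ d → ∀ (hq : 2*e - a < n),
    Equiv.Perm.sign (rv n (2*e) a hq) = (-1)^(e - a) := by
  intro d
  induction d with
  | zero =>
      intro a ha hq
      have h1 : e - a = 0 := by omega
      rw [rv_eq_one n (2*e) a hq (by omega), h1]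
      simp
  | succ d ih =>
      intro a ha hq
      by_cases hc : e ≤ a
      · have h1 : e - a = 0 := by omega
        rw [rv_eq_one n (2*e) a hq (by omega), h1]
        simp
      · push_neg at hc
        have hq' : 2*e - (a+1) < n := by omega
        rw [rv_succ n (2*e) a hq hq' (by omega), map_mul,
          Equiv.Perm.sign_swap (by simp [Fin.ext_iff]; omega), ih (a+1) (by omega) hq']
        have : e - a = (e - (a+1)) + 1 := by omega
        rw [this, pow_succ]
        exact mul_comm _ _
lemma det_step (n H : ℕ) (h1 : 2^H ≤ n) (h2 : n < 2 * 2^H) :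
    D n = (-1)^(n - 2^H) * D (2*2^H - 1 - n) := by
  set p := 2^H with hp
  set m := 2*p - 1 - n with hm
  have hp0 : 0 < p := pow_pos (by norm_num) H
  have hmn : m < n := by omega
  have hq : 2*(p-1) - m < n := by omega
  set r := rv n (2*(p-1)) m hq with hr
  have hrval : ∀ i : Fin n, ((r i : Fin n) : ℕ) =
      if m ≤ (i:ℕ) then 2*p - 2 - (i:ℕ) else (i:ℕ) := by
    intro i
    rw [hr, rv_apply]
    have := i.2
    split_ifs <;> omega
  have hrr : ∀ i : Fin n, r (r i) = i := fun i => rvf_invol n _ m hq i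
  have hsign : ((Equiv.Perm.sign r : ℤˣ) : ℤ) = (-1)^(n - p) := by
    have hs := rv_sign n (p-1) ((p-1) - m) m (le_refl _) hq
    rw [hr, hs]
    have he : (p-1) - m = n - p := by omega
    rw [he]
    push_cast
    ring
  set M : Matrix (Fin n) (Fin n) ℤ := Matrix.of (fun i j : Fin n => A ((i:ℕ) + (j:ℕ))) with hM
  have hDn : D n = M.det := rfl
  set em : Fin m ≃ {x : Fin n // (x:ℕ) < m} :=
    { toFun := fun a => ⟨⟨(a:ℕ), lt_trans a.2 hmn⟩, a.2⟩
      invFun := fun x => ⟨((x : Fin n) : ℕ), x.2⟩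
      left_inv := fun a => rfl
      right_inv := fun x => rfl } with hemdef
  set ext : Equiv.Perm (Fin m) → Equiv.Perm (Fin n) := fun ρ => ρ.extendDomain em with hext
  have hext_lt : ∀ (ρ : Equiv.Perm (Fin m)) (i : Fin n) (h : (i:ℕ) < m),
      ((ext ρ i : Fin n) : ℕ) = ((ρ ⟨(i:ℕ), h⟩ : Fin m) : ℕ) := by
    intro ρ i h
    rw [hext]
    rw [Equiv.Perm.extendDomain_apply_subtype ρ em h]
    rfl
  have hext_ge : ∀ (ρ : Equiv.Perm (Fin m)) (i : Fin n), ¬ ((i:ℕ) < m) → ext ρ i = i := by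
    intro ρ i h
    rw [hext]
    exact Equiv.Perm.extendDomain_apply_not_subtype ρ em h
  have hext_inj : Function.Injective ext := by
    intro ρ₁ ρ₂ hρ
    apply Equiv.ext
    intro a
    apply Fin.ext
    have hlt : (((⟨(a:ℕ), lt_trans a.2 hmn⟩ : Fin n)) : ℕ) < m := a.2
    have e1 := hext_lt ρ₁ ⟨(a:ℕ), lt_trans a.2 hmn⟩ hlt
    have e2 := hext_lt ρ₂ ⟨(a:ℕ), lt_trans a.2 hmn⟩ hlt
    rw [hρ] at e1
    rw [e2] at e1
    exact e1.symm
  have himage : ∀ τ : Equiv.Perm (Fin n),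
      (∀ i : Fin n, A (((r (τ i) : Fin n) : ℕ) + (i:ℕ)) ≠ 0) → ∃ ρ, ext ρ = τ := by
    intro τ hτ
    set σ : Equiv.Perm (Fin n) := τ.trans r with hσdef
    have hgood : ∀ i : Fin n, ∃ k, ((σ i : Fin n):ℕ) + (i:ℕ) + 2 = 2^(k+1) := by
      intro i
      by_contra hcon
      exact hτ i (A_eq_zero hcon)
    obtain ⟨Hc, Hd⟩ := forcing h1 h2 σ hgood
    rw [← hp] at Hc Hd
    rw [← hm] at Hc Hd
    have hri : ∀ i : Fin n, τ i = r (σ i) := fun i => (hrr (τ i)).symm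
    have tame1 : ∀ i : Fin n, m ≤ (i:ℕ) → τ i = i := by
      intro i hi
      have h3 := Hc i hi
      apply Fin.ext
      rw [hri i, hrval]
      have h4 : ((σ i : Fin n):ℕ) = 2*p - 2 - (i:ℕ) := by omega
      rw [h4]
      have := i.2
      split_ifs <;> omega
    have tame2 : ∀ i : Fin n, (i:ℕ) < m → ((τ i : Fin n):ℕ) < m := by
      intro i hi
      have h3 := Hd i hi
      rw [hri i, hrval]
      split_ifs <;> omega
    have tame2' : ∀ i : Fin n, (i:ℕ) < m → ((τ⁻¹ i : Fin n):ℕ) < m := by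
      intro i hi
      by_contra hcon
      push_neg at hcon
      have h5 := tame1 (τ⁻¹ i) hcon
      rw [show τ (τ⁻¹ i) = i from τ.apply_symm_apply i] at h5
      have := congrArg Fin.val h5
      omega
    set ρ : Equiv.Perm (Fin m) :=
      { toFun := fun a => ⟨((τ ⟨(a:ℕ), lt_trans a.2 hmn⟩ : Fin n):ℕ), tame2 _ a.2⟩
        invFun := fun a => ⟨((τ⁻¹ ⟨(a:ℕ), lt_trans a.2 hmn⟩ : Fin n):ℕ), tame2' _ a.2⟩
        left_inv := fun a => by apply Fin.ext; simp
        right_inv := fun a => by apply Fin.ext; simp } with hρdef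
    refine ⟨ρ, ?_⟩
    apply Equiv.ext
    intro i
    by_cases hi : (i:ℕ) < m
    · apply Fin.ext
      rw [hext_lt ρ i hi]
      rfl
    · rw [hext_ge ρ i hi, tame1 i (by omega)]
  have key : (M.submatrix r id).det = D m := by
    rw [Matrix.det_apply]
    have hzero : ∀ τ ∈ (Finset.univ : Finset (Equiv.Perm (Fin n))),
        τ ∉ Finset.univ.image ext →
        (Equiv.Perm.sign τ) • ∏ i, (M.submatrix r id) (τ i) i = 0 := by
      intro τ _ hτ
      by_contra hne
      apply hτ
      have hprod : ∏ i, (M.submatrix ⇑r id) (τ i) i ≠ 0 := by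
        intro h0; rw [h0, smul_zero] at hne; exact hne rfl
      have hfac : ∀ i : Fin n, A (((r (τ i) : Fin n):ℕ) + (i:ℕ)) ≠ 0 := by
        intro i
        exact Finset.prod_ne_zero_iff.mp hprod i (Finset.mem_univ i)
      obtain ⟨ρ, hρ⟩ := himage τ hfac
      rw [← hρ]
      exact Finset.mem_image_of_mem ext (Finset.mem_univ ρ)
    rw [← Finset.sum_subset (Finset.subset_univ (Finset.univ.image ext)) hzero]
    rw [Finset.sum_image (fun ρ₁ _ ρ₂ _ h => hext_inj h)]
    unfold D
    rw [Matrix.det_apply]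
    apply Finset.sum_congr rfl
    intro ρ _
    rw [Equiv.Perm.sign_extendDomain ρ em]
    congr 1
    rw [← Fintype.prod_subtype_mul_prod_subtype (fun x : Fin n => (x:ℕ) < m)
        (fun i => (M.submatrix ⇑r id) ((ext ρ) i) i)]
    have hone : ∏ x : {x : Fin n // ¬ (x:ℕ) < m},
        (M.submatrix ⇑r id) ((ext ρ) (x : Fin n)) (x : Fin n) = 1 := by
      apply Finset.prod_eq_one
      intro x _
      have hx : ¬ ((x : Fin n) : ℕ) < m := x.2
      rw [hext_ge ρ (x : Fin n) hx]
      show A (((r (x : Fin n) : Fin n):ℕ) + ((x : Fin n):ℕ)) = 1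
      have e2 : ((r (x : Fin n) : Fin n):ℕ) + ((x : Fin n):ℕ) = 2*p - 2 := by
        rw [hrval]
        have := (x : Fin n).2
        split_ifs <;> omega
      rw [e2]
      apply A_eq_one
      exact ⟨H, by rw [pow_succ]; omega⟩
    rw [hone, mul_one]
    rw [← Equiv.prod_comp em (fun x : {x : Fin n // (x:ℕ) < m} =>
        (M.submatrix ⇑r id) ((ext ρ) (x : Fin n)) (x : Fin n))]
    apply Finset.prod_congr rfl
    intro a _
    have h4 : ((ext ρ (⟨(a:ℕ), lt_trans a.2 hmn⟩ : Fin n) : Fin n) : ℕ) = ((ρ a : Fin m) : ℕ) :=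
      hext_lt ρ ⟨(a:ℕ), lt_trans a.2 hmn⟩ a.2
    show A (((r (ext ρ ⟨(a:ℕ), lt_trans a.2 hmn⟩) : Fin n):ℕ) + (a:ℕ))
        = A (((ρ a : Fin m):ℕ) + (a:ℕ))
    have h5 : ((r (ext ρ ⟨(a:ℕ), lt_trans a.2 hmn⟩) : Fin n):ℕ) = ((ρ a : Fin m):ℕ) := by
      rw [hrval, h4]
      have := (ρ a).2
      split_ifs <;> omega
    rw [h5]
  rw [hDn, ← key]
  rw [Matrix.det_permute r M]
  rw [← mul_assoc]
  have hu : ((Equiv.Perm.sign r : ℤˣ) : ℤ) * ((Equiv.Perm.sign r : ℤˣ) : ℤ) = 1 := by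
    rw [← Units.val_mul, Int.units_mul_self, Units.val_one]
  rw [hsign] at hu ⊢
  rw [Int.cast_id, hu, one_mul]

lemma S_ones (S : ℕ → ℤ) (hS0 : S 0 = 1) (hSo : ∀ n : ℕ, S (2 * n + 1) = S n) :
    ∀ u, S (2^u - 1) = 1 := by
  intro u
  induction u with
  | zero => simpa using hS0
  | succ u ih =>
    have hu : 0 < 2^u := pow_pos (by norm_num) _
    have h : 2^(u+1) - 1 = 2 * (2^u - 1) + 1 := by rw [pow_succ]; omega
    rw [h, hSo]
    exact ih

lemma S_pair (S : ℕ → ℤ) (hSe : ∀ n : ℕ, S (2 * n) = (-1 : ℤ) ^ n)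
    (hSo : ∀ n : ℕ, S (2 * n + 1) = S n) :
    ∀ H, ∀ j, j < 2^H - 1 → S j * S (2^(H+1) - 2 - j) = -1 := by
  intro H
  induction H with
  | zero => intro j hj; simp at hj
  | succ G ih =>
    intro j hj
    have hG : 0 < 2^G := pow_pos (by norm_num) _
    have hx : (2:ℕ)^(G+1) = 2 * 2^G := by ring
    have hx2 : (2:ℕ)^(G+1+1) = 4 * 2^G := by ring
    rcases Nat.even_or_odd j with ⟨a, ha⟩ | ⟨a, ha⟩
    · have e1 : j = 2 * a := by omega
      have e2 : 2^(G+1+1) - 2 - j = 2 * (2^(G+1) - 1 - a) := by omega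
      rw [e2, e1, hSe, hSe, ← pow_add]
      have e3 : a + (2^(G+1) - 1 - a) = 2 * (2^G - 1) + 1 := by omega
      rw [e3]
      exact Odd.neg_one_pow ⟨2^G - 1, rfl⟩
    · have e1 : j = 2*a + 1 := by omega
      have e2 : 2^(G+1+1) - 2 - j = 2 * (2^(G+1) - 2 - a) + 1 := by omega
      have e4 : 2^(G+1) - 2 - a = 2^(G+1) - 2 - a := rfl
      rw [e2, e1, hSo, hSo]
      have e5 : (2:ℕ)^(G+1) - 2 - a = 2^(G+1) - 2 - a := rfl
      have : S a * S (2^(G+1) - 2 - a) = -1 := by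
        have hja : a < 2^G - 1 := by omega
        have := ih a hja
        have e6 : (2:ℕ)^(G+1) - 2 - a = 2^(G+1) - 2 - a := rfl
        exact this
      exact this

lemma S_block (S : ℕ → ℤ) (hS0 : S 0 = 1) (hSe : ∀ n : ℕ, S (2 * n) = (-1 : ℤ) ^ n)
    (hSo : ∀ n : ℕ, S (2 * n + 1) = S n) (H : ℕ) :
    ∀ t, t ≤ 2^H - 1 →
      ∏ j ∈ Finset.Ico (2^H - 1 - t) (2^H + t), S j = (-1)^t := by
  have hc : 0 < 2^H := pow_pos (by norm_num) _
  intro t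
  induction t with
  | zero =>
    intro _
    have h1 : Finset.Ico (2^H - 1 - 0) (2^H + 0) = {2^H - 1} := by
      ext x
      simp only [Finset.mem_Ico, Finset.mem_singleton]
      omega
    rw [h1, Finset.prod_singleton]
    simpa using S_ones S hS0 hSo H
  | succ t ih =>
    intro ht
    have htop : ∏ j ∈ Finset.Ico (2^H - 1 - (t+1)) (2^H + (t+1)), S j
        = (∏ j ∈ Finset.Ico (2^H - 1 - (t+1)) (2^H + t), S j) * S (2^H + t) := by
      rw [show 2^H + (t+1) = (2^H + t) + 1 from rfl]
      exact Finset.prod_Ico_succ_top (by omega) _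
    have hbot : ∏ j ∈ Finset.Ico (2^H - 1 - (t+1)) (2^H + t), S j
        = S (2^H - 1 - (t+1)) * ∏ j ∈ Finset.Ico (2^H - 1 - t) (2^H + t), S j := by
      rw [Finset.prod_eq_prod_Ico_succ_bot (show 2^H - 1 - (t+1) < 2^H + t by omega) S]
      have e : 2^H - 1 - (t+1) + 1 = 2^H - 1 - t := by omega
      rw [e]
    rw [htop, hbot, ih (by omega)]
    have hx1 : (2:ℕ)^(H+1) = 2*2^H := by ring
    have hpair := S_pair S hSe hSo H (2^H - 1 - (t+1))
      (show 2^H - 1 - (t+1) < 2^H - 1 by omega)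
    have e7 : 2^(H+1) - 2 - (2^H - 1 - (t+1)) = 2^H + t := by omega
    rw [e7] at hpair
    calc S (2^H - 1 - (t+1)) * (-1:ℤ)^t * S (2^H + t)
        = (S (2^H - 1 - (t+1)) * S (2^H + t)) * (-1)^t := by ring
      _ = (-1) * (-1)^t := by rw [hpair]
      _ = (-1)^(t+1) := by rw [pow_succ]; ring

theorem stmt8 (S : ℕ → ℤ) (hS0 : S 0 = 1)
    (hSe : ∀ n : ℕ, S (2 * n) = (-1 : ℤ) ^ n)
    (hSo : ∀ n : ℕ, S (2 * n + 1) = S n) :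
    ∀ n : ℕ, D n = ∏ j ∈ Finset.range n, S j := by
  intro n
  induction n using Nat.strong_induction_on with
  | _ n ih =>
    by_cases hn : n = 0
    · subst hn
      simp [D, Matrix.det_fin_zero]
    · have hn0 : 0 < n := Nat.pos_of_ne_zero hn
      have hs0 : 0 < Nat.size n := Nat.size_pos.mpr hn0
      set Hh := Nat.size n - 1 with hHh
      have h1 : 2^Hh ≤ n := Nat.lt_size.mp (by omega)
      have h2 : n < 2 * 2^Hh := by
        have ha := Nat.lt_size_self n
        have hb : (2:ℕ)^(Nat.size n) = 2 * 2^Hh := by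
          rw [show Nat.size n = Hh + 1 by omega, pow_succ]
          ring
        omega
      have hp0 : 0 < 2^Hh := pow_pos (by norm_num) _
      set m := 2*2^Hh - 1 - n with hm
      have hmn : m < n := by omega
      rw [det_step n Hh h1 h2, ih m hmn]
      rw [← Finset.prod_range_mul_prod_Ico S (le_of_lt hmn)]
      have hIco : Finset.Ico m n = Finset.Ico (2^Hh - 1 - (n - 2^Hh)) (2^Hh + (n - 2^Hh)) := by
        congr 1 <;> omega
      rw [show (∏ j ∈ Finset.Ico m n, S j) = (-1:ℤ)^(n - 2^Hh) from by
        rw [hIco]; exact S_block S hS0 hSe hSo Hh (n - 2^Hh) (by omega)]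
      ring
end
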